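/- Let K be a field, d ≥ 1, and let q = (q₁,...,q_{2d}) be 2d distinct elements of K partitioned into two d-element sets q_A and q_B. Suppose there exist a polynomial f of degree d, constant on q_A with value in q and constant on q_B with value in q, with the two values distinct. Then there exist at least 2d(2d−1) distinct degree-d polynomials g ∈ K[x] such that g({q₁,...,q_{2d}}) ⊆ {q₁,...,q_{2d}}. -/

import Mathlib

open Polynomial

theorem stmt_9 {K : Type*} [Field K] (d : ℕ) (hd : 1 ≤ d)
    (q : Fin (2 * d) → K) (hq : Function.Injective q)
    (A B : Finset (Fin (2 * d))) (hA : A.card = d) (hB : B.card = d)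
    (hAB : Disjoint A B)
    (f : K[X]) (hfd : f.natDegree = d) (u v : K)
    (hu : u ∈ Set.range q) (hv : v ∈ Set.range q) (huv : u ≠ v)
    (hfA : ∀ a ∈ A, f.eval (q a) = u) (hfB : ∀ b ∈ B, f.eval (q b) = v) :
    2 * d * (2 * d - 1) ≤
      Set.ncard {g : K[X] | g.natDegree = d ∧
        ∀ x ∈ Set.range q, g.eval x ∈ Set.range q} := by
  classical
  set T : Set K[X] := {g : K[X] | g.natDegree = d ∧
      ∀ x ∈ Set.range q, g.eval x ∈ Set.range q} with hT
  -- A ∪ B = univ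
  have hABu : A ∪ B = Finset.univ := by
    apply Finset.eq_univ_of_card
    rw [Finset.card_union_of_disjoint hAB, hA, hB, Fintype.card_fin]
    ring
  -- A, B nonempty
  obtain ⟨a₀, ha₀⟩ : A.Nonempty := Finset.card_pos.mp (by omega)
  obtain ⟨b₀, hb₀⟩ : B.Nonempty := Finset.card_pos.mp (by omega)
  have hvu : v - u ≠ 0 := sub_ne_zero.mpr (Ne.symm huv)
  -- the family of polynomials
  set c : Fin (2*d) → Fin (2*d) → K := fun i j => (q j - q i) / (v - u) with hc
  set g : Fin (2*d) → Fin (2*d) → K[X] :=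
    fun i j => C (c i j) * f + C (q i - c i j * u) with hg
  have hevalA : ∀ i j, ∀ a ∈ A, (g i j).eval (q a) = q i := by
    intro i j a ha
    simp [hg, hfA a ha]
  have hevalB : ∀ i j, ∀ b ∈ B, (g i j).eval (q b) = q j := by
    intro i j b hb
    simp only [hg, eval_add, eval_mul, eval_C, hfB b hb]
    field_simp [hc]
    simp only [hc]
    linear_combination div_mul_cancel₀ (q j - q i) hvu
  have hmem : ∀ i j, i ≠ j → g i j ∈ T := by
    intro i j hij
    have hcne : c i j ≠ 0 := by
      apply div_ne_zero _ hvu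
      exact sub_ne_zero.mpr fun h => hij (hq h).symm
    constructor
    · have h1 : (C (c i j) * f).natDegree = d := by
        rw [natDegree_C_mul hcne, hfd]
      rw [hg]
      simp only []
      rw [natDegree_add_C, h1]
    · rintro x ⟨k, rfl⟩
      have hk : k ∈ A ∪ B := hABu ▸ Finset.mem_univ k
      rcases Finset.mem_union.mp hk with h | h
      · rw [hevalA i j k h]; exact ⟨i, rfl⟩
      · rw [hevalB i j k h]; exact ⟨j, rfl⟩
  -- T is finite
  have hfin : T.Finite := by
    rw [← Set.finite_coe_iff]
    have : Finite ↥(Set.range q) := (Set.finite_range q).to_subtype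
    apply Finite.of_injective
      (fun x : T => (fun k : Fin (2*d) => (⟨(x : K[X]).eval (q k), x.2.2 _ ⟨k, rfl⟩⟩ :
        Set.range q)))
    rintro ⟨g₁, hg₁⟩ ⟨g₂, hg₂⟩ h
    have heq : ∀ k, g₁.eval (q k) = g₂.eval (q k) := by
      intro k
      have := congrFun h k
      simpa using this
    have : g₁ - g₂ = 0 := by
      apply eq_zero_of_natDegree_lt_card_of_eval_eq_zero _ hq
      · intro k; simp [heq k]
      · rw [Fintype.card_fin]
        calc (g₁ - g₂).natDegree ≤ max g₁.natDegree g₂.natDegree := natDegree_sub_le _ _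
        _ < 2 * d := by rw [hg₁.1, hg₂.1]; omega
    exact Subtype.ext (sub_eq_zero.mp this)
  -- injectivity on off-diagonal pairs
  set P : Finset (Fin (2*d) × Fin (2*d)) := Finset.univ.offDiag with hP
  have hinj : Set.InjOn (fun p : Fin (2*d) × Fin (2*d) => g p.1 p.2) ↑P := by
    rintro ⟨i, j⟩ hij ⟨i', j'⟩ hij' h
    simp only at h
    have h1 : q i = q i' := by
      rw [← hevalA i j a₀ ha₀, ← hevalA i' j' a₀ ha₀, h]
    have h2 : q j = q j' := by
      rw [← hevalB i j b₀ hb₀, ← hevalB i' j' b₀ hb₀, h]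
    exact Prod.ext (hq h1) (hq h2)
  have hsub : (fun p : Fin (2*d) × Fin (2*d) => g p.1 p.2) '' ↑P ⊆ T := by
    rintro _ ⟨⟨i, j⟩, hij, rfl⟩
    have : i ≠ j := by
      simp only [hP, Finset.mem_coe, Finset.mem_offDiag] at hij
      exact hij.2.2
    exact hmem i j this
  have hcard : ((fun p : Fin (2*d) × Fin (2*d) => g p.1 p.2) '' ↑P).ncard
      = 2 * d * (2 * d - 1) := by
    rw [Set.ncard_image_of_injOn hinj, Set.ncard_coe_finset, hP, Finset.offDiag_card]
    rw [Finset.card_univ, Fintype.card_fin, Nat.mul_sub, mul_one]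
  calc 2 * d * (2 * d - 1) = _ := hcard.symm
    _ ≤ T.ncard := Set.ncard_le_ncard hsub hfin
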